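/- arXiv:1012.1507 — 2 statements merged into one kernel-verified Lean document; each statement's English description precedes it below -/
import Mathlib

section
/- Let S be a nonempty finite set of nonzero integers. There exists a complex number ξ with |ξ| = 1 such that ξ^k = -1 for all k ∈ S if and only if all elements of S have the same 2-adic valuation. -/
open Complex Real

private lemma aux_val2 {d n : ℕ} (hd : d ≠ 0) (hn : n ≠ 0) (h1 : d ∣ 2 * n)
    (h2 : ¬ d ∣ n) : padicValNat 2 d = padicValNat 2 n + 1 := by
  have h2n : (2 * n) ≠ 0 := by positivity
  have hle : d.factorization ≤ (2 * n).factorization :=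
    (Nat.factorization_le_iff_dvd hd h2n).mpr h1
  have hfact2 : (2 * n).factorization = Finsupp.single 2 1 + n.factorization := by
    rw [Nat.factorization_mul two_ne_zero hn, Nat.Prime.factorization Nat.prime_two]
  have hub : d.factorization 2 ≤ n.factorization 2 + 1 := by
    have := hle 2
    rw [hfact2] at this
    simpa [Finsupp.single_apply, add_comm] using this
  have hlb : ¬ d.factorization 2 ≤ n.factorization 2 := by
    intro hc
    apply h2
    rw [← Nat.factorization_le_iff_dvd hd hn]
    intro p
    rcases eq_or_ne p 2 with rfl | hp
    · exact hc
    · have := hle p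
      rw [hfact2] at this
      simpa [Finsupp.single_apply, hp.symm] using this
  have heq : d.factorization 2 = n.factorization 2 + 1 := by omega
  rwa [Nat.factorization_def d Nat.prime_two, Nat.factorization_def n Nat.prime_two] at heq

/-- Let `S` be a nonempty finite set of nonzero integers. There exists a complex
number `ξ` with `|ξ| = 1` such that `ξ^k = -1` for all `k ∈ S` if and only if all elements of
`S` have the same 2-adic valuation. -/
theorem prime_circle_weight_criterion (S : Finset ℤ) (hS : S.Nonempty)
    (h0 : ∀ k ∈ S, k ≠ 0) :
    (∃ ξ : ℂ, ‖ξ‖ = 1 ∧ ∀ k ∈ S, ξ ^ k = -1) ↔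
      ∀ k ∈ S, ∀ l ∈ S, padicValInt 2 k = padicValInt 2 l := by
  constructor
  · rintro ⟨ξ, hξ, hpow⟩
    have hne : ξ ≠ 0 := by intro h; simp [h] at hξ
    set u : ℂˣ := Units.mk0 ξ hne with hu
    have huval : ∀ n : ℤ, ((u ^ n : ℂˣ) : ℂ) = ξ ^ n := fun n => by
      rw [Units.val_zpow_eq_zpow_val]; rfl
    -- key claim: for each k ∈ S, padicValNat 2 (orderOf u) = padicValInt 2 k + 1
    have key : ∀ k ∈ S, padicValNat 2 (orderOf u) = padicValInt 2 k + 1 := by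
      intro k hk
      have hk0 : k ≠ 0 := h0 k hk
      have h2k : u ^ (2 * k) = 1 := by
        have : ξ ^ (2 * k) = 1 := by
          rw [mul_comm, zpow_mul, hpow k hk]; norm_num
        apply Units.ext; rw [huval]; simpa using this
      have hnk : ¬ u ^ k = 1 := by
        intro h
        have : ξ ^ k = 1 := by rw [← huval]; simpa using congrArg Units.val h
        rw [hpow k hk] at this
        exact (by norm_num : (-1 : ℂ) ≠ 1) this
      have hfin : IsOfFinOrder u := by
        rw [isOfFinOrder_iff_pow_eq_one]
        refine ⟨(2 * k).natAbs, by simpa using hk0, ?_⟩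
        have := h2k
        rcases Int.natAbs_eq (2 * k) with h | h
        · rw [h] at this; exact_mod_cast (by exact_mod_cast this : u ^ (((2*k).natAbs : ℤ)) = 1)
        · rw [h] at this
          have : u ^ (((2 * k).natAbs : ℤ)) = 1 := by
            rwa [zpow_neg, inv_eq_one] at this
          exact_mod_cast this
      have hdpos : orderOf u ≠ 0 := (orderOf_pos_iff.mpr hfin).ne'
      have hdvd : (orderOf u : ℤ) ∣ 2 * k := orderOf_dvd_iff_zpow_eq_one.mpr h2k
      have hndvd : ¬ (orderOf u : ℤ) ∣ k := fun h =>
        hnk (orderOf_dvd_iff_zpow_eq_one.mp h)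
      have hdvdn : orderOf u ∣ 2 * k.natAbs := by
        have := Int.natAbs_dvd_natAbs.mpr hdvd
        simpa [Int.natAbs_mul] using this
      have hndvdn : ¬ orderOf u ∣ k.natAbs := by
        intro h
        exact hndvd ((Int.natCast_dvd_natCast.mpr h).trans (Int.natAbs_dvd.mpr dvd_rfl))
      have := aux_val2 hdpos (by simpa using hk0) hdvdn hndvdn
      rw [this]; rfl
    intro k hk l hl
    have := key k hk
    have := key l hl
    omega
  · intro h
    obtain ⟨k₀, hk₀⟩ := hS
    set a := padicValInt 2 k₀ with ha
    refine ⟨Complex.exp ((π / 2 ^ a : ℝ) * I), by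
      rw [Complex.norm_exp_ofReal_mul_I], ?_⟩
    intro k hk
    have hka : padicValInt 2 k = a := h k hk k₀ hk₀
    have hdvd : (2 : ℤ) ^ a ∣ k := by
      have := @padicValInt_dvd 2 k
      rw [hka] at this; exact_mod_cast this
    obtain ⟨m, hm⟩ := hdvd
    have hk0 : k ≠ 0 := h0 k hk
    have hmodd : Odd m := by
      rw [← Int.not_even_iff_odd]
      intro ⟨c, hc⟩
      have : (2 : ℤ) ^ (a + 1) ∣ k := ⟨c, by rw [hm, hc]; ring⟩
      have := (@padicValInt_dvd_iff 2 ⟨Nat.prime_two⟩ (a + 1) k).1 (by exact_mod_cast this)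
      rcases this with h | h
      · exact hk0 h
      · omega
    have hexp : Complex.exp ((π / 2 ^ a : ℝ) * I) ^ k
        = Complex.exp ((k : ℂ) * ((π / 2 ^ a : ℝ) * I)) := by
      rw [Complex.exp_int_mul]
    rw [hexp]
    have harg : (k : ℂ) * ((π / 2 ^ a : ℝ) * I) = (m : ℂ) * ((π : ℝ) * I) := by
      have h2a : ((2 : ℂ) ^ a) ≠ 0 := pow_ne_zero a two_ne_zero
      push_cast
      rw [hm]
      push_cast
      field_simp
    rw [harg, Complex.exp_int_mul, Complex.exp_pi_mul_I]
    exact hmodd.neg_one_zpow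
end

section
/- Substituting g = ξ with ξ^{k_j} = -1 into the rational expression ∏_{j=1}^{r} (1 + g^{k_j} e^{-c_j})/(1 - g^{k_j} e^{-c_j}), viewed in a graded-commutative ℚ-algebra where each c_j is a nilpotent element of degree 2, yields (∏_{j=1}^r c_j) · u, where u is an invertible element (a unit) of the algebra. -/
open Finset

/-- The truncated exponential `e^{-c} = Σ_{n<N} (-c)^n / n!`, which is the full exponential as
soon as `c^N = 0`. -/
noncomputable def expNeg {A : Type*} [CommRing A] [Algebra ℂ A] (c : A) (N : ℕ) : A :=
  ∑ n ∈ Finset.range N, algebraMap ℂ A ((-1) ^ n / n.factorial) * c ^ n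

lemma expNeg_succ_of_pow_eq_zero {A : Type*} [CommRing A] [Algebra ℂ A] {c : A} {N : ℕ}
    (hc : c ^ N = 0) : expNeg c (N + 1) = expNeg c N := by
  unfold expNeg
  rw [Finset.sum_range_succ, hc, mul_zero, add_zero]

lemma one_sub_expNeg {A : Type*} [CommRing A] [Algebra ℂ A] (c : A) (M : ℕ) :
    1 - expNeg c (M + 1) =
      c * ∑ n ∈ Finset.range M, algebraMap ℂ A ((-1) ^ n / (n + 1).factorial) * c ^ n := by
  unfold expNeg
  rw [Finset.sum_range_succ']
  simp only [pow_zero, Nat.factorial_zero, Nat.cast_one, div_one, map_one, one_mul, mul_one]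
  rw [Finset.mul_sum]
  have : ∀ n ∈ Finset.range M,
      c * (algebraMap ℂ A ((-1) ^ n / (n + 1).factorial) * c ^ n) =
      -(algebraMap ℂ A ((-1) ^ (n + 1) / (n + 1).factorial) * c ^ (n + 1)) := by
    intro n _
    have h1 : ((-1 : ℂ) ^ (n + 1) / (n + 1).factorial) = -((-1) ^ n / (n + 1).factorial) := by
      rw [pow_succ]; ring
    rw [h1, map_neg, pow_succ]
    ring
  rw [Finset.sum_congr rfl this, Finset.sum_neg_distrib]
  ring

lemma factor_eq {A : Type*} [CommRing A] [Algebra ℂ A] (c : A) (M : ℕ) (hM : 1 ≤ M)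
    (hc : c ^ (M + 1) = 0) :
    ∃ u : Aˣ, (1 - expNeg c (M + 1)) * Ring.inverse (1 + expNeg c (M + 1)) = c * u := by
  have hcnil : IsNilpotent c := ⟨M + 1, hc⟩
  obtain ⟨m, rfl⟩ : ∃ m, M = m + 1 := ⟨M - 1, (Nat.succ_pred_eq_of_pos hM).symm⟩
  set w : A := ∑ n ∈ Finset.range (m + 1),
      algebraMap ℂ A ((-1) ^ n / (n + 1).factorial) * c ^ n with hw
  have hnum : 1 - expNeg c (m + 1 + 1) = c * w := one_sub_expNeg c (m + 1)
  -- w = 1 + c * t, so w is a unit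
  have hw1 : w = c * (∑ n ∈ Finset.range m,
      algebraMap ℂ A ((-1) ^ (n + 1) / (n + 2).factorial) * c ^ n) + 1 := by
    rw [hw, Finset.sum_range_succ', Finset.mul_sum]
    norm_num
    refine Finset.sum_congr rfl fun n _ => ?_
    rw [pow_succ]
    ring
  have hwu : IsUnit w := by
    rw [hw1]
    exact ((Commute.all c _).isNilpotent_mul_right hcnil).isUnit_add_one
  have hnumnil : IsNilpotent (1 - expNeg c (m + 1 + 1)) := by
    rw [hnum]
    exact (Commute.all c _).isNilpotent_mul_right hcnil
  have hden : IsUnit (1 + expNeg c (m + 1 + 1)) := by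
    have h2 : IsUnit (2 : A) := by
      have : (algebraMap ℂ A) 2 = (2 : A) := map_ofNat _ 2
      exact this ▸ (isUnit_iff_ne_zero.mpr (two_ne_zero)).map (algebraMap ℂ A)
    have heq : (1 + expNeg c (m + 1 + 1)) = 2 + -(1 - expNeg c (m + 1 + 1)) := by ring
    rw [heq]
    exact hnumnil.neg.isUnit_add_left_of_commute h2 (Commute.all _ _)
  refine ⟨hwu.unit * hden.unit⁻¹, ?_⟩
  have hinv := Ring.inverse_unit hden.unit
  rw [hden.unit_spec] at hinv
  rw [hnum, hinv, Units.val_mul, hwu.unit_spec]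
  ring

/-- Substituting `g = ξ` with `ξ^{k_j} = -1` into
`∏_j (1 + g^{k_j} e^{-c_j})/(1 - g^{k_j} e^{-c_j})`, in a (graded-)commutative algebra where
each `c_j` is nilpotent (of degree 2), yields `(∏_j c_j) · u` with `u` a unit: indeed each
factor becomes `(1 - e^{-c_j})/(1 + e^{-c_j})`, whose numerator is `c_j · (unit)` and whose
denominator `2 + (nilpotent)` is a unit. -/
theorem prime_substitution_extracts_euler_class
    {A : Type*} [CommRing A] [Algebra ℂ A] (r N : ℕ)
    (c : Fin r → A) (hc : ∀ j, c j ^ N = 0)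
    (k : Fin r → ℤ) (ξ : ℂ) (hξ : ∀ j, ξ ^ k j = -1) :
    ∃ u : Aˣ,
      (∏ j, (1 + algebraMap ℂ A (ξ ^ k j) * expNeg (c j) N) *
        Ring.inverse (1 - algebraMap ℂ A (ξ ^ k j) * expNeg (c j) N)) =
      (∏ j, c j) * (u : A) := by
  -- simplify using ξ^{k j} = -1
  have hsub : ∀ j : Fin r,
      (1 + algebraMap ℂ A (ξ ^ k j) * expNeg (c j) N) *
        Ring.inverse (1 - algebraMap ℂ A (ξ ^ k j) * expNeg (c j) N) =
      (1 - expNeg (c j) N) * Ring.inverse (1 + expNeg (c j) N) := by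
    intro j
    rw [hξ j, map_neg, map_one]
    ring_nf
  rcases isEmpty_or_nonempty (Fin r) with hr | hr
  · exact ⟨1, by simp [Finset.univ_eq_empty]⟩
  rcases Nat.eq_zero_or_pos N with rfl | hN
  · have : (1 : A) = 0 := by simpa using hc (Classical.arbitrary (Fin r))
    have : Subsingleton A := subsingleton_of_zero_eq_one this.symm
    exact ⟨1, Subsingleton.elim _ _⟩
  -- bump N to N+1 ≥ 2
  have hexp : ∀ j, expNeg (c j) N = expNeg (c j) (N + 1) :=
    fun j => (expNeg_succ_of_pow_eq_zero (hc j)).symm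
  have hfac : ∀ j : Fin r, ∃ u : Aˣ,
      (1 + algebraMap ℂ A (ξ ^ k j) * expNeg (c j) N) *
        Ring.inverse (1 - algebraMap ℂ A (ξ ^ k j) * expNeg (c j) N) = c j * u := by
    intro j
    rw [hsub j, hexp j]
    exact factor_eq (c j) N hN (by rw [pow_succ, hc j, zero_mul])
  choose u hu using hfac
  refine ⟨∏ j, u j, ?_⟩
  rw [Finset.prod_congr rfl fun j _ => hu j, Finset.prod_mul_distrib]
  push_cast
  rfl
end
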